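/- Let C₁, C₂ be conjugations on a complex Hilbert space H and let Q = C⋄ ∘ C⊞ : H ⊕ H → H ⊕ H. Then Q is an orthogonal projection (i.e. Q is linear, Q² = Q and Q* = Q), its range is {C₁f ⊕ C₂f : f ∈ H} and its kernel is {C₁f ⊕ (−C₂f) : f ∈ H}. -/
import Mathlib


open scoped ComplexInnerProductSpace

noncomputable section

/-- X is a bounded antilinear operator. -/
def IsBddAntilinear {E F : Type*} [NormedAddCommGroup E] [InnerProductSpace ℂ E]
    [NormedAddCommGroup F] [InnerProductSpace ℂ F] (X : E → F) : Prop :=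
  (∀ x y, X (x + y) = X x + X y) ∧
  (∀ (a : ℂ) (x : E), X (a • x) = (starRingEnd ℂ) a • X x) ∧
  Continuous X

/-- C is a conjugation: an antilinear involution with ⟨Cf, Cg⟩ = ⟨g, f⟩. -/
def IsConjugation {H : Type*} [NormedAddCommGroup H] [InnerProductSpace ℂ H] (C : H → H) : Prop :=
  (∀ x y, C (x + y) = C x + C y) ∧
  (∀ (a : ℂ) (x : H), C (a • x) = (starRingEnd ℂ) a • C x) ∧
  (∀ x, C (C x) = x) ∧
  (∀ x y, ⟪C x, C y⟫ = ⟪y, x⟫)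

/-- C⋄ = (1/√2)(C₁ ⋄ C₂) : H → H ⊕ H, f ↦ (1/√2)(C₁f ⊕ C₂f). -/
def Cdia {H : Type*} [NormedAddCommGroup H] [InnerProductSpace ℂ H] (C₁ C₂ : H → H) :
    H → H × H :=
  fun f => (((Real.sqrt 2 : ℂ))⁻¹ • C₁ f, ((Real.sqrt 2 : ℂ))⁻¹ • C₂ f)

/-- C⊞ = (1/√2)(C₁ ⊞ C₂) : H ⊕ H → H, f ⊕ g ↦ (1/√2)(C₁f + C₂g). -/
def Cbox {H : Type*} [NormedAddCommGroup H] [InnerProductSpace ℂ H] (C₁ C₂ : H → H) :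
    H × H → H :=
  fun p => ((Real.sqrt 2 : ℂ))⁻¹ • C₁ p.1 + ((Real.sqrt 2 : ℂ))⁻¹ • C₂ p.2

lemma Q_eq {H : Type*} [NormedAddCommGroup H] [InnerProductSpace ℂ H]
    (C₁ C₂ : H → H) (h₁ : IsConjugation C₁) (h₂ : IsConjugation C₂) (p : H × H) :
    Cdia C₁ C₂ (Cbox C₁ C₂ p) =
      ((2:ℂ)⁻¹ • (p.1 + C₁ (C₂ p.2)), (2:ℂ)⁻¹ • (C₂ (C₁ p.1) + p.2)) := by
  obtain ⟨a1, s1, i1, _⟩ := h₁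
  obtain ⟨a2, s2, i2, _⟩ := h₂
  have hs : (starRingEnd ℂ) ((Real.sqrt 2 : ℂ))⁻¹ = ((Real.sqrt 2 : ℂ))⁻¹ := by
    simp [Complex.conj_ofReal]
  have hss : ((Real.sqrt 2 : ℂ))⁻¹ * ((Real.sqrt 2 : ℂ))⁻¹ = (2:ℂ)⁻¹ := by
    rw [← mul_inv, ← Complex.ofReal_mul, Real.mul_self_sqrt (by norm_num)]; norm_num
  simp only [Cdia, Cbox, a1, s1, a2, s2, hs, smul_smul, hss, i1, i2, smul_add,
    Complex.ofReal_ofNat]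

lemma conj_neg {H : Type*} [NormedAddCommGroup H] [InnerProductSpace ℂ H]
    (C : H → H) (h : IsConjugation C) (x : H) : C (-x) = -C x := by
  have := h.2.1 (-1) x; simpa using this

lemma conj_cross {H : Type*} [NormedAddCommGroup H] [InnerProductSpace ℂ H]
    (C₁ C₂ : H → H) (h₁ : IsConjugation C₁) (h₂ : IsConjugation C₂) (x y : H) :
    ⟪C₁ (C₂ x), y⟫ = ⟪x, C₂ (C₁ y)⟫ := by
  calc ⟪C₁ (C₂ x), y⟫ = ⟪C₁ (C₂ x), C₁ (C₁ y)⟫ := by rw [h₁.2.2.1]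
    _ = ⟪C₁ y, C₂ x⟫ := h₁.2.2.2 _ _
    _ = ⟪C₂ (C₂ (C₁ y)), C₂ x⟫ := by rw [h₂.2.2.1]
    _ = ⟪x, C₂ (C₁ y)⟫ := h₂.2.2.2 _ _

/-- Proposition 2.3 (4),(5),(6): Q = C⋄ ∘ C⊞ is an orthogonal projection on H ⊕ H
(linear, idempotent, selfadjoint), with range {C₁f ⊕ C₂f : f ∈ H} and
kernel {C₁f ⊕ (−C₂f) : f ∈ H}. -/
theorem stmt3 {H : Type*} [NormedAddCommGroup H] [InnerProductSpace ℂ H] [CompleteSpace H]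
    (C₁ C₂ : H → H) (h₁ : IsConjugation C₁) (h₂ : IsConjugation C₂) :
    (∀ p q : H × H, Cdia C₁ C₂ (Cbox C₁ C₂ (p + q)) =
      Cdia C₁ C₂ (Cbox C₁ C₂ p) + Cdia C₁ C₂ (Cbox C₁ C₂ q)) ∧
    (∀ (a : ℂ) (p : H × H), Cdia C₁ C₂ (Cbox C₁ C₂ (a • p)) = a • Cdia C₁ C₂ (Cbox C₁ C₂ p)) ∧
    (∀ p : H × H, Cdia C₁ C₂ (Cbox C₁ C₂ (Cdia C₁ C₂ (Cbox C₁ C₂ p))) =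
      Cdia C₁ C₂ (Cbox C₁ C₂ p)) ∧
    (∀ p q : H × H,
      ⟪(Cdia C₁ C₂ (Cbox C₁ C₂ p)).1, q.1⟫ + ⟪(Cdia C₁ C₂ (Cbox C₁ C₂ p)).2, q.2⟫ =
        ⟪p.1, (Cdia C₁ C₂ (Cbox C₁ C₂ q)).1⟫ + ⟪p.2, (Cdia C₁ C₂ (Cbox C₁ C₂ q)).2⟫) ∧
    (Set.range (fun p : H × H => Cdia C₁ C₂ (Cbox C₁ C₂ p)) =
      {p : H × H | ∃ f : H, p = (C₁ f, C₂ f)}) ∧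
    ({p : H × H | Cdia C₁ C₂ (Cbox C₁ C₂ p) = 0} =
      {p : H × H | ∃ f : H, p = (C₁ f, -(C₂ f))}) := by
  obtain ⟨a1, s1, i1, ip1⟩ := id h₁
  obtain ⟨a2, s2, i2, ip2⟩ := id h₂
  have Q := Q_eq C₁ C₂ h₁ h₂
  have hc : (starRingEnd ℂ) ((2:ℂ)⁻¹) = (2:ℂ)⁻¹ := by simp [map_inv₀, Complex.conj_ofNat]
  have hs : (starRingEnd ℂ) ((Real.sqrt 2 : ℂ))⁻¹ = ((Real.sqrt 2 : ℂ))⁻¹ := by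
    simp [Complex.conj_ofReal]
  refine ⟨?_, ?_, ?_, ?_, ?_, ?_⟩
  · intro p q
    simp only [Q, Prod.fst_add, Prod.snd_add, a1, a2, Prod.mk_add_mk, Prod.mk.injEq]
    constructor <;> module
  · intro a p
    simp only [Q, Prod.smul_fst, Prod.smul_snd, s1, s2, Complex.conj_conj, Prod.smul_mk,
      Prod.mk.injEq]
    constructor <;> module
  · intro p
    simp only [Q, s1, s2, a1, a2, i1, i2, hc, smul_add, Prod.mk.injEq]
    constructor <;> module
  · intro p q
    simp only [Q]
    simp only [inner_smul_left, inner_smul_right, inner_add_left, inner_add_right, hc,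
      conj_cross C₁ C₂ h₁ h₂, conj_cross C₂ C₁ h₂ h₁]
    ring
  · ext p
    simp only [Set.mem_range, Set.mem_setOf_eq]
    constructor
    · rintro ⟨q, rfl⟩
      exact ⟨((Real.sqrt 2 : ℂ))⁻¹ • Cbox C₁ C₂ q, by simp [Cdia, s1, s2, hs]⟩
    · rintro ⟨f, rfl⟩
      refine ⟨(C₁ f, C₂ f), ?_⟩
      simp only [Q, i1, i2, Prod.mk.injEq]
      constructor <;> module
  · ext p
    simp only [Set.mem_setOf_eq, Q, Prod.mk_eq_zero]
    constructor
    · rintro ⟨hA, -⟩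
      have h0 : p.1 + C₁ (C₂ p.2) = 0 := by
        rcases smul_eq_zero.mp hA with h | h
        · norm_num at h
        · exact h
      refine ⟨-C₂ p.2, ?_⟩
      have hp1 : p.1 = -C₁ (C₂ p.2) := by linear_combination (norm := module) h0
      rw [conj_neg C₁ h₁, conj_neg C₂ h₂, i2]
      exact Prod.ext (by rw [hp1]) (by simp)
    · rintro ⟨f, rfl⟩
      simp only [conj_neg C₂ h₂, conj_neg C₁ h₁, i1, i2]
      constructor <;> module
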